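/- For every n ≥ 2 such that n is not a power of 2, the order superpower graph S(SD_{8n}) of the semidihedral group SD_{8n} of order 8n is not minimally edge connected. -/

import Mathlib

/-- The degree of a vertex: the number of its neighbours. -/
noncomputable def gDeg {V : Type*} (G : SimpleGraph V) (v : V) : ℕ :=
  (G.neighborSet v).ncard

/-- The minimum degree of a graph. -/
noncomputable def minDeg {V : Type*} (G : SimpleGraph V) : ℕ :=
  sInf (Set.range (gDeg G))

/-- The edge connectivity: the minimum size of a set of edges whose removal
disconnects the graph. -/
noncomputable def edgeConn {V : Type*} (G : SimpleGraph V) : ℕ :=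
  sInf {n : ℕ | ∃ S : Set (Sym2 V), S ⊆ G.edgeSet ∧ S.ncard = n ∧
    ¬ (G.deleteEdges S).Connected}

/-- The vertex connectivity: the minimum size of a set of vertices whose removal
disconnects the graph or leaves a single vertex. -/
noncomputable def vertexConn {V : Type*} (G : SimpleGraph V) : ℕ :=
  sInf {n : ℕ | ∃ S : Set V, S.ncard = n ∧ Sᶜ.Nonempty ∧
    (¬ (G.induce Sᶜ).Preconnected ∨ Sᶜ.ncard = 1)}

/-- A graph is minimally edge connected if deleting any edge decreases the
edge connectivity by one. -/
def MinEdgeConnected {V : Type*} (G : SimpleGraph V) : Prop :=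
  ∀ e ∈ G.edgeSet, edgeConn (G.deleteEdges {e}) = edgeConn G - 1

/-- A graph is minimally connected if deleting any edge decreases the
vertex connectivity by one. -/
def MinConnected {V : Type*} (G : SimpleGraph V) : Prop :=
  ∀ e ∈ G.edgeSet, vertexConn (G.deleteEdges {e}) = vertexConn G - 1

/-- The power graph of a group: distinct `x, y` are adjacent iff one is a
natural power of the other. -/
def powerGraph (G : Type*) [Group G] : SimpleGraph G :=
  SimpleGraph.fromRel (fun x y => ∃ m : ℕ, y = x ^ m)

/-- The enhanced power graph of a group: distinct `x, y` are adjacent iff they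
lie in a common cyclic subgroup. -/
def enhancedPowerGraph (G : Type*) [Group G] : SimpleGraph G :=
  SimpleGraph.fromRel
    (fun x y => ∃ z : G, x ∈ Subgroup.zpowers z ∧ y ∈ Subgroup.zpowers z)

/-- The order superpower graph of a group: distinct `x, y` are adjacent iff the
order of one divides the order of the other. -/
def superpowerGraph (G : Type*) [Group G] : SimpleGraph G :=
  SimpleGraph.fromRel (fun x y => orderOf x ∣ orderOf y)

/-- The relators of the semidihedral group
`SD_{8n} = ⟨a, b : a^{4n} = b^2 = e, b a = a^{2n-1} b⟩`, where the generator `a`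
is `FreeGroup.of 0` and `b` is `FreeGroup.of 1`. -/
def sdRels (n : ℕ) : Set (FreeGroup (Fin 2)) :=
  {FreeGroup.of 0 ^ (4 * n), FreeGroup.of 1 ^ 2,
    (FreeGroup.of 1 * FreeGroup.of 0) *
      (FreeGroup.of 0 ^ (2 * n - 1) * FreeGroup.of 1)⁻¹}

/-- The semidihedral group `SD_{8n}` of order `8n`, given by the presentation
`⟨a, b : a^{4n} = b^2 = e, b a = a^{2n-1} b⟩`. -/
abbrev SemidihedralGroup (n : ℕ) : Type := PresentedGroup (sdRels n)

open Set SimpleGraph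

section Graph
variable {V : Type*} [Finite V]

lemma aux_not_connected (H : SimpleGraph V) (w u : V) (hwu : w ≠ u)
    (h : ∀ z, ¬ H.Adj w z) : ¬ H.Connected := by
  intro hc
  obtain ⟨p⟩ := hc.preconnected w u
  cases p with
  | nil => exact hwu rfl
  | cons h' _ => exact h _ h'

lemma main_graph (G : SimpleGraph V) (u₁ u₂ w : V)
    (hu₁ : ∀ v, v ≠ u₁ → G.Adj u₁ v) (hu₂ : ∀ v, v ≠ u₂ → G.Adj u₂ v)
    (h12 : u₁ ≠ u₂) (hw : 2 * gDeg G w + 1 ≤ Nat.card V) :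
    ¬ MinEdgeConnected G := by
  classical
  have hne : Nonempty V := ⟨u₁⟩
  set δ := minDeg G with hδdef
  have hδw : δ ≤ gDeg G w := Nat.sInf_le ⟨w, rfl⟩
  have h2δ : 2 * δ + 1 ≤ Nat.card V := le_trans (by omega) hw
  -- degree of universal vertices
  have hdegU : ∀ u : V, (∀ v, v ≠ u → G.Adj u v) → gDeg G u = Nat.card V - 1 := by
    intro u hu
    have : G.neighborSet u = {u}ᶜ := by
      ext z
      simp only [mem_neighborSet, mem_compl_iff, mem_singleton_iff]
      exact ⟨fun h => (G.ne_of_adj h).symm, fun h => hu z h⟩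
    rw [gDeg, this, ← Set.ncard_univ (α := V), compl_eq_univ_diff,
      Set.ncard_diff (subset_univ _) (Set.toFinite _), Set.ncard_singleton]
  -- min degree attained
  obtain ⟨w', hw'⟩ : ∃ w', gDeg G w' = δ := by
    have := Nat.sInf_mem (s := Set.range (gDeg G)) ⟨gDeg G u₁, u₁, rfl⟩
    exact this
  have hδ1 : 1 ≤ δ := by
    rw [← hw']
    rcases eq_or_ne w' u₁ with h | h
    · have : u₂ ∈ G.neighborSet w' := by
        subst h; exact hu₁ u₂ (Ne.symm h12)
      exact Set.ncard_pos (s := G.neighborSet w') (Set.toFinite _) |>.mpr ⟨u₂, this⟩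
    · have : u₁ ∈ G.neighborSet w' := (hu₁ w' h).symm
      exact Set.ncard_pos (s := G.neighborSet w') (Set.toFinite _) |>.mpr ⟨u₁, this⟩
  have hw'u₁ : w' ≠ u₁ := by
    intro h
    rw [h, hdegU u₁ hu₁] at hw'
    omega
  have hw'u₂ : w' ≠ u₂ := by
    intro h
    rw [h, hdegU u₂ hu₂] at hw'
    omega
  set e : Sym2 V := s(u₁, u₂) with hedef
  have he : e ∈ G.edgeSet := hu₁ u₂ (Ne.symm h12)
  -- the set of edges at w'
  set Sw : Set (Sym2 V) := (fun z => s(w', z)) '' (G.neighborSet w') with hSwdef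
  have hSwE : Sw ⊆ G.edgeSet := by
    rintro t ⟨z, hz, rfl⟩
    exact hz
  have hinjL : ∀ x : V, Set.InjOn (fun z => s(z, x)) {z | z ≠ x} := by
    intro x a ha b hb hab
    rw [Sym2.eq_iff] at hab
    rcases hab with ⟨h, -⟩ | ⟨h1, h2⟩
    · exact h
    · exact h1.trans h2
  have hinjR : ∀ x : V, Set.InjOn (fun z => s(x, z)) {z | z ≠ x} := by
    intro x a ha b hb hab
    rw [Sym2.eq_iff] at hab
    rcases hab with ⟨-, h⟩ | ⟨h1, h2⟩
    · exact h
    · exact h2.trans h1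
  have hSwcard : Sw.ncard = δ := by
    have hinj : Set.InjOn (fun z => s(w', z)) (G.neighborSet w') :=
      Set.InjOn.mono (fun z hz => (G.ne_of_adj hz).symm) (hinjR w')
    rw [hSwdef, Set.ncard_image_of_injOn hinj]
    exact hw'
  have heSw : e ∉ Sw := by
    rintro ⟨z, hz, hzz⟩
    rw [hedef] at hzz
    simp only [Sym2.eq_iff] at hzz
    rcases hzz with ⟨h1, -⟩ | ⟨h1, -⟩
    · exact hw'u₁ h1
    · exact hw'u₂ h1
  -- w' isolated after deleting Sw
  have hiso : ∀ (G' : SimpleGraph V), (∀ a b, G'.Adj a b → G.Adj a b) →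
      ∀ z, ¬ (G'.deleteEdges Sw).Adj w' z := by
    intro G' hG' z hz
    rw [deleteEdges_adj] at hz
    exact hz.2 ⟨z, hG' _ _ hz.1, rfl⟩
  have hnc1 : ¬ (G.deleteEdges Sw).Connected :=
    aux_not_connected _ w' u₁ hw'u₁ (hiso G (fun _ _ h => h))
  have hnc2 : ¬ ((G.deleteEdges {e}).deleteEdges Sw).Connected :=
    aux_not_connected _ w' u₁ hw'u₁
      (hiso _ (fun _ _ h => (deleteEdges_adj.mp h).1))
  have hG_le : edgeConn G ≤ δ := Nat.sInf_le ⟨Sw, hSwE, hSwcard, hnc1⟩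
  have hmem : δ ∈ {m : ℕ | ∃ S : Set (Sym2 V), S ⊆ (G.deleteEdges {e}).edgeSet ∧
      S.ncard = m ∧ ¬ ((G.deleteEdges {e}).deleteEdges S).Connected} := by
    refine ⟨Sw, ?_, hSwcard, hnc2⟩
    rw [edgeSet_deleteEdges]
    exact fun t ht => ⟨hSwE ht, by rintro rfl; exact heSw ht⟩
  -- lower bound
  have hlow : ∀ m ∈ {m : ℕ | ∃ S : Set (Sym2 V), S ⊆ (G.deleteEdges {e}).edgeSet ∧
      S.ncard = m ∧ ¬ ((G.deleteEdges {e}).deleteEdges S).Connected}, δ ≤ m := by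
    rintro m ⟨S, hSsub, rfl, hdisc⟩
    by_contra hlt
    push_neg at hlt
    have hm : S.ncard + 1 ≤ δ := hlt
    set H := (G.deleteEdges {e}).deleteEdges S with hHdef
    have hH : ∀ a b, H.Adj a b ↔ G.Adj a b ∧ s(a, b) ≠ e ∧ s(a, b) ∉ S := by
      intro a b
      rw [hHdef, deleteEdges_adj, deleteEdges_adj]
      simp [and_assoc]
    have hpre : ¬ H.Preconnected := fun hp => hdisc ⟨hp⟩
    rw [SimpleGraph.Preconnected] at hpre
    push_neg at hpre
    obtain ⟨x, y, hxy⟩ := hpre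
    set C : Set V := {z | ¬ H.Reachable u₁ z} with hCdef
    have hu₁C : u₁ ∉ C := fun h => h (Reachable.refl _)
    have hCne : C.Nonempty := by
      by_contra hC
      rw [Set.not_nonempty_iff_eq_empty] at hC
      have hx : H.Reachable u₁ x := by
        by_contra h; exact absurd (hC ▸ h : x ∈ (∅ : Set V)) (Set.notMem_empty x)
      have hy : H.Reachable u₁ y := by
        by_contra h; exact absurd (hC ▸ h : y ∈ (∅ : Set V)) (Set.notMem_empty y)
      exact hxy (hx.symm.trans hy)
    have hcross : ∀ v ∈ C, ∀ z, z ∉ C → G.Adj v z → (s(v, z) = e ∨ s(v, z) ∈ S) := by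
      intro v hv z hz hadj
      by_contra hcon
      push_neg at hcon
      have : H.Adj z v := by
        rw [hH]
        refine ⟨hadj.symm, ?_, ?_⟩
        · rw [Sym2.eq_swap]; exact hcon.1
        · rw [Sym2.eq_swap]; exact hcon.2
      exact hv ((not_not.mp hz).trans this.reachable)
    set c := C.ncard with hcdef
    have hc1 : 1 ≤ c := Set.ncard_pos (Set.toFinite _) |>.mpr hCne
    by_cases hu₂C : u₂ ∈ C
    · -- case u₂ ∈ C
      set A : Set (Sym2 V) := (fun z => s(z, u₁)) '' (C \ {u₂}) with hAdef
      set B : Set (Sym2 V) := (fun z => s(z, u₂)) '' (Cᶜ \ {u₁}) with hBdef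
      have hAS : A ⊆ S := by
        rintro t ⟨z, ⟨hzC, hz2⟩, rfl⟩
        have hz1 : z ≠ u₁ := fun h => hu₁C (h ▸ hzC)
        rcases hcross z hzC u₁ hu₁C (hu₁ z hz1).symm with h | h
        · exfalso
          rw [hedef] at h
          simp only [Sym2.eq_iff] at h
          rcases h with ⟨h1, -⟩ | ⟨h1, h2⟩
          · exact hz1 h1
          · exact hz2 h1
        · exact h
      have hBS : B ⊆ S := by
        rintro t ⟨z, ⟨hzC, hz1⟩, rfl⟩
        rw [Set.mem_compl_iff] at hzC
        have hz2 : z ≠ u₂ := fun h => hzC (h ▸ hu₂C)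
        have := hcross u₂ hu₂C z hzC (hu₂ z hz2)
        rcases this with h | h
        · exfalso
          rw [hedef, Sym2.eq_iff] at h
          rcases h with ⟨h1, -⟩ | ⟨-, h2⟩
          · exact h12 h1.symm
          · exact hz1 (Set.mem_singleton_iff.mpr h2)
        · rwa [Sym2.eq_swap] at h
      have hABdisj : Disjoint A B := by
        rw [Set.disjoint_left]
        rintro t ⟨z, ⟨hzC, -⟩, rfl⟩ ⟨z', ⟨-, hz'1⟩, ht⟩
        have hz1 : z ≠ u₁ := fun h => hu₁C (h ▸ hzC)
        rw [Set.mem_singleton_iff] at hz'1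
        rw [Sym2.eq_iff] at ht
        rcases ht with ⟨-, h2⟩ | ⟨h1, -⟩
        · exact h12 h2.symm
        · exact hz'1 h1
      have hAcard : A.ncard + 1 = c := by
        have hinj : Set.InjOn (fun z => s(z, u₁)) (C \ {u₂}) :=
          Set.InjOn.mono (fun z hz => (fun h => hu₁C (by rw [← h]; exact hz.1))) (hinjL u₁)
        rw [hAdef, Set.ncard_image_of_injOn hinj,
          Set.ncard_diff_singleton_add_one hu₂C (Set.toFinite _)]
      have hBcard : B.ncard + 1 + c = Nat.card V := by
        have hinj : Set.InjOn (fun z => s(z, u₂)) (Cᶜ \ {u₁}) :=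
          Set.InjOn.mono (fun z hz => (fun h => hz.1 (by rw [h]; exact hu₂C))) (hinjL u₂)
        rw [hBdef, Set.ncard_image_of_injOn hinj]
        have h1 : (Cᶜ \ {u₁}).ncard + 1 = Cᶜ.ncard :=
          Set.ncard_diff_singleton_add_one (Set.mem_compl hu₁C) (Set.toFinite _)
        have h2 : C.ncard + Cᶜ.ncard = Nat.card V :=
          Set.ncard_add_ncard_compl C (Set.toFinite _) (Set.toFinite _)
        omega
      have hcard : A.ncard + B.ncard ≤ S.ncard := by
        rw [← Set.ncard_union_eq hABdisj (Set.toFinite _) (Set.toFinite _)]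
        exact Set.ncard_le_ncard (Set.union_subset hAS hBS) (Set.toFinite _)
      omega
    · -- case u₂ ∉ C
      obtain ⟨v, hvC⟩ := hCne
      have hv1 : v ≠ u₁ := fun h => hu₁C (h ▸ hvC)
      have hv2 : v ≠ u₂ := fun h => hu₂C (h ▸ hvC)
      set A : Set (Sym2 V) := (fun z => s(z, u₁)) '' C with hAdef
      set B : Set (Sym2 V) := (fun z => s(v, z)) '' (G.neighborSet v \ (C ∪ {u₁, u₂}))
        with hBdef
      have hAS : A ⊆ S := by
        rintro t ⟨z, hzC, rfl⟩
        have hz1 : z ≠ u₁ := fun h => hu₁C (h ▸ hzC)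
        have hz2 : z ≠ u₂ := fun h => hu₂C (h ▸ hzC)
        rcases hcross z hzC u₁ hu₁C (hu₁ z hz1).symm with h | h
        · exfalso
          rw [hedef] at h
          simp only [Sym2.eq_iff] at h
          rcases h with ⟨h1, -⟩ | ⟨h1, -⟩
          · exact hz1 h1
          · exact hz2 h1
        · exact h
      have hDS : s(v, u₂) ∈ S := by
        rcases hcross v hvC u₂ hu₂C (hu₂ v hv2).symm with h | h
        · exfalso
          rw [hedef] at h
          simp only [Sym2.eq_iff] at h
          rcases h with ⟨h1, -⟩ | ⟨-, h2⟩
          · exact hv1 h1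
          · exact h12 h2.symm
        · exact h
      have hBS : B ⊆ S := by
        rintro t ⟨z, ⟨hzN, hz⟩, rfl⟩
        simp only [Set.mem_union, Set.mem_insert_iff, Set.mem_singleton_iff, not_or] at hz
        obtain ⟨hzC, hz1, hz2⟩ := hz
        rcases hcross v hvC z hzC hzN with h | h
        · exfalso
          rw [hedef] at h
          simp only [Sym2.eq_iff] at h
          rcases h with ⟨h1, -⟩ | ⟨-, h2⟩
          · exact hv1 h1
          · exact hz1 h2
        · exact h
      have hABdisj : Disjoint A B := by
        rw [Set.disjoint_left]
        rintro t ⟨z, hzC, rfl⟩ ⟨z', ⟨-, hz'⟩, ht⟩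
        simp only [Set.mem_union, Set.mem_insert_iff, Set.mem_singleton_iff, not_or] at hz'
        have hz1 : z ≠ u₁ := fun h => hu₁C (h ▸ hzC)
        simp only [Sym2.eq_iff] at ht
        rcases ht with ⟨-, h2⟩ | ⟨h1, -⟩
        · exact hz'.2.1 h2
        · exact hv1 h1
      have hDA : s(v, u₂) ∉ A := by
        rintro ⟨z, hzC, ht⟩
        simp only [Sym2.eq_iff] at ht
        rcases ht with ⟨-, h2⟩ | ⟨h1, h2⟩
        · exact h12 h2
        · exact hu₂C (h1 ▸ hzC)
      have hDB : s(v, u₂) ∉ B := by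
        rintro ⟨z, ⟨-, hz⟩, ht⟩
        simp only [Set.mem_union, Set.mem_insert_iff, Set.mem_singleton_iff, not_or] at hz
        simp only [Sym2.eq_iff] at ht
        rcases ht with ⟨-, h2⟩ | ⟨h1, -⟩
        · exact hz.2.2 h2
        · exact hv2 h1
      have hAcard : A.ncard = c := by
        rw [hAdef, Set.ncard_image_of_injOn]
        intro a ha b hb hab
        simp only [Sym2.eq_iff] at hab
        rcases hab with ⟨h, -⟩ | ⟨h1, h2⟩
        · exact h
        · rw [h1, ← h2]
      have hBcard : B.ncard + (c + 1) ≥ δ := by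
        have hinj : Set.InjOn (fun z => s(v, z)) (G.neighborSet v \ (C ∪ {u₁, u₂})) := by
          intro a ha b hb hab
          simp only [Sym2.eq_iff] at hab
          rcases hab with ⟨-, h⟩ | ⟨h1, h2⟩
          · exact h
          · rw [← h1, h2]
        rw [hBdef, Set.ncard_image_of_injOn hinj]
        have hsub : G.neighborSet v ⊆ (G.neighborSet v \ (C ∪ {u₁, u₂})) ∪ ((C \ {v}) ∪ {u₁, u₂}) := by
          intro z hz
          by_cases h : z ∈ C ∪ {u₁, u₂}
          · right
            rcases h with h | h
            · left
              refine ⟨h, ?_⟩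
              rintro rfl
              exact G.irrefl hz
            · right; exact h
          · left; exact ⟨hz, h⟩
        have h1 : δ ≤ (G.neighborSet v).ncard := Nat.sInf_le ⟨v, rfl⟩
        have h2 : ((C \ {v}) ∪ ({u₁, u₂} : Set V)).ncard ≤ (c - 1) + 2 := by
          refine le_trans (Set.ncard_union_le _ _) ?_
          have h3 : (C \ {v}).ncard = c - 1 := by
            rw [Set.ncard_diff_singleton_of_mem hvC]
          have h4 : ({u₁, u₂} : Set V).ncard ≤ 2 := by
            refine le_trans (Set.ncard_insert_le _ _) ?_
            simp [Set.ncard_singleton]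
          omega
        have h5 := le_trans (Set.ncard_le_ncard hsub (Set.toFinite _))
          (Set.ncard_union_le _ _)
        omega
      have hcard : A.ncard + B.ncard + 1 ≤ S.ncard := by
        have hdisj2 : Disjoint (A ∪ B) {s(v, u₂)} := by
          rw [Set.disjoint_singleton_right]
          rintro (h | h)
          · exact hDA h
          · exact hDB h
        have : (A ∪ B ∪ {s(v, u₂)}).ncard = A.ncard + B.ncard + 1 := by
          rw [Set.ncard_union_eq hdisj2 (Set.toFinite _) (Set.toFinite _),
            Set.ncard_union_eq hABdisj (Set.toFinite _) (Set.toFinite _),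
            Set.ncard_singleton]
        rw [← this]
        refine Set.ncard_le_ncard ?_ (Set.toFinite _)
        refine Set.union_subset (Set.union_subset hAS hBS) ?_
        simpa using hDS
      omega
  have hGe : edgeConn (G.deleteEdges {e}) = δ := by
    refine le_antisymm (Nat.sInf_le hmem) (le_csInf ⟨δ, hmem⟩ hlow)
  intro hmin
  have := hmin e he
  rw [hGe] at this
  omega

end Graph


section SD

def sdU (n : ℕ) : ZMod (4 * n) := 2 * (n : ZMod (4 * n)) - 1

lemma sd4cast (n : ℕ) : (4 * (n : ZMod (4 * n))) = 0 := by
  have h := ZMod.natCast_self (4 * n)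
  push_cast at h
  exact h

lemma sdU_sq (n : ℕ) : sdU n * sdU n = 1 := by
  unfold sdU
  linear_combination ((n : ZMod (4 * n)) - 1) * sd4cast n

def sdB (n : ℕ) : Equiv.Perm (ZMod (4 * n)) where
  toFun x := sdU n * x
  invFun x := sdU n * x
  left_inv x := by
    show sdU n * (sdU n * x) = x
    rw [← mul_assoc, sdU_sq, one_mul]
  right_inv x := by
    show sdU n * (sdU n * x) = x
    rw [← mul_assoc, sdU_sq, one_mul]

def sdA (n : ℕ) : Equiv.Perm (ZMod (4 * n)) := Equiv.addLeft 1

lemma sdA_pow (n k : ℕ) (x : ZMod (4 * n)) : ((sdA n) ^ k) x = (k : ZMod (4 * n)) + x := by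
  induction k generalizing x with
  | zero => simp
  | succ k ih =>
    rw [pow_succ, Equiv.Perm.mul_apply]
    have : (sdA n) x = 1 + x := rfl
    rw [this, ih]
    push_cast
    ring

lemma sdB_pow (n k : ℕ) (x : ZMod (4 * n)) : ((sdB n) ^ k) x = (sdU n) ^ k * x := by
  induction k generalizing x with
  | zero => simp
  | succ k ih =>
    rw [pow_succ, Equiv.Perm.mul_apply]
    have : (sdB n) x = sdU n * x := rfl
    rw [this, ih, pow_succ]
    ring

lemma sdA_pow_card (n : ℕ) : (sdA n) ^ (4 * n) = 1 := by
  ext x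
  rw [sdA_pow]
  simp [ZMod.natCast_self]

lemma sdB_sq (n : ℕ) : (sdB n) ^ 2 = 1 := by
  ext x
  rw [sdB_pow, pow_two, sdU_sq, one_mul]
  rfl

lemma sdU_cast (n : ℕ) (hn : 1 ≤ n) : ((2 * n - 1 : ℕ) : ZMod (4 * n)) = sdU n := by
  have h : (1 : ℕ) ≤ 2 * n := by omega
  rw [Nat.cast_sub h]
  push_cast
  rfl

lemma sdBA (n : ℕ) (hn : 1 ≤ n) : sdB n * sdA n = (sdA n) ^ (2 * n - 1) * sdB n := by
  ext x
  rw [Equiv.Perm.mul_apply, Equiv.Perm.mul_apply, sdA_pow]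
  have h1 : (sdA n) x = 1 + x := rfl
  have h2 : ∀ y, (sdB n) y = sdU n * y := fun _ => rfl
  rw [h1, h2, h2, sdU_cast n hn]
  ring

def sdf (n : ℕ) : Fin 2 → Equiv.Perm (ZMod (4 * n)) := fun i =>
  match i with
  | 0 => sdA n
  | 1 => sdB n

lemma sdf_rels (n : ℕ) (hn : 1 ≤ n) : ∀ r ∈ sdRels n, FreeGroup.lift (sdf n) r = 1 := by
  intro r hr
  rcases hr with rfl | rfl | rfl
  · rw [map_pow, FreeGroup.lift_apply_of]
    exact sdA_pow_card n
  · rw [map_pow, FreeGroup.lift_apply_of]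
    exact sdB_sq n
  · simp only [map_mul, map_inv, map_pow, FreeGroup.lift_apply_of]
    show sdB n * sdA n * ((sdA n) ^ (2 * n - 1) * sdB n)⁻¹ = 1
    rw [mul_inv_eq_one]
    exact sdBA n hn

noncomputable def sdφ (n : ℕ) (hn : 1 ≤ n) : SemidihedralGroup n →* Equiv.Perm (ZMod (4 * n)) :=
  PresentedGroup.toGroup (sdf_rels n hn)

end SD

section SD2
variable (n : ℕ)

noncomputable def sdα : SemidihedralGroup n := PresentedGroup.of 0
noncomputable def sdβ : SemidihedralGroup n := PresentedGroup.of 1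

lemma sd_rel_one {r : FreeGroup (Fin 2)} (hr : r ∈ sdRels n) :
    PresentedGroup.mk (sdRels n) r = 1 := by
  change (QuotientGroup.mk r : SemidihedralGroup n) = 1
  rw [QuotientGroup.eq_one_iff]
  exact Subgroup.subset_normalClosure hr

lemma sdα_pow : (sdα n) ^ (4 * n) = 1 := by
  have h := sd_rel_one n (r := FreeGroup.of 0 ^ (4 * n)) (by left; rfl)
  rw [map_pow] at h
  exact h

lemma sdβ_sq : (sdβ n) ^ 2 = 1 := by
  have h := sd_rel_one n (r := FreeGroup.of 1 ^ 2) (by right; left; rfl)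
  rw [map_pow] at h
  exact h

lemma sd_rel3 : sdβ n * sdα n = (sdα n) ^ (2 * n - 1) * sdβ n := by
  have h := sd_rel_one n
    (r := (FreeGroup.of 1 * FreeGroup.of 0) * (FreeGroup.of 0 ^ (2 * n - 1) * FreeGroup.of 1)⁻¹)
    (by right; right; rfl)
  rw [map_mul, map_inv, map_mul, map_mul, map_pow, mul_inv_eq_one] at h
  exact h

lemma sd_conj (k : ℕ) : sdβ n * (sdα n) ^ k = (sdα n) ^ ((2 * n - 1) * k) * sdβ n := by
  induction k with
  | zero => simp
  | succ k ih =>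
    have h : (2 * n - 1) * k + (2 * n - 1) = (2 * n - 1) * (k + 1) := by ring
    rw [pow_succ, ← mul_assoc, ih, mul_assoc, sd_rel3, ← mul_assoc, ← pow_add, h]

lemma sdα_mod (a : ℕ) : (sdα n) ^ a = (sdα n) ^ (a % (4 * n)) := by
  conv_lhs => rw [← Nat.div_add_mod a (4 * n)]
  rw [pow_add, pow_mul, sdα_pow, one_pow, one_mul]

lemma sdβ_mod (a : ℕ) : (sdβ n) ^ a = (sdβ n) ^ (a % 2) := by
  conv_lhs => rw [← Nat.div_add_mod a 2]
  rw [pow_add, pow_mul, sdβ_sq, one_pow, one_mul]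

lemma sd_classify (hn : 1 ≤ n) (x : SemidihedralGroup n) :
    ∃ i j : ℕ, x = (sdα n) ^ i * (sdβ n) ^ j := by
  let H : Subgroup (SemidihedralGroup n) := {
    carrier := {x | ∃ i j : ℕ, x = (sdα n) ^ i * (sdβ n) ^ j}
    one_mem' := ⟨0, 0, by simp⟩
    mul_mem' := by
      rintro x y ⟨i, j, rfl⟩ ⟨k, l, rfl⟩
      rcases Nat.mod_two_eq_zero_or_one j with hj | hj
      · refine ⟨i + k, l, ?_⟩
        rw [sdβ_mod n j, hj, pow_zero, mul_one]
        group
      · refine ⟨i + (2 * n - 1) * k, 1 + l, ?_⟩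
        rw [sdβ_mod n j, hj, pow_one, mul_assoc, ← mul_assoc (sdβ n), sd_conj]
        group
    inv_mem' := by
      rintro x ⟨i, j, rfl⟩
      have hinvα : ((sdα n) ^ i)⁻¹ = (sdα n) ^ ((4 * n - 1) * i) := by
        symm
        rw [eq_inv_iff_mul_eq_one, ← pow_add]
        have h1 : i ≤ 4 * n * i := Nat.le_mul_of_pos_left i (by omega)
        have h2 : (4 * n - 1) * i + i = 4 * n * i := by
          rw [Nat.sub_mul, one_mul, Nat.sub_add_cancel h1]
        rw [h2, pow_mul, sdα_pow, one_pow]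
      rcases Nat.mod_two_eq_zero_or_one j with hj | hj
      · refine ⟨(4 * n - 1) * i, 0, ?_⟩
        rw [sdβ_mod n j, hj]
        simp only [pow_zero, mul_one]
        rw [hinvα]
      · refine ⟨(2 * n - 1) * ((4 * n - 1) * i), 1, ?_⟩
        rw [sdβ_mod n j, hj, pow_one, mul_inv_rev, hinvα]
        have hβinv : (sdβ n)⁻¹ = sdβ n := by
          symm
          rw [eq_inv_iff_mul_eq_one, ← pow_two, sdβ_sq]
        rw [hβinv, sd_conj] }
  have hH : ∀ j : Fin 2, PresentedGroup.of j ∈ H := by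
    intro j
    match j with
    | 0 => exact ⟨1, 0, by simp [sdα]⟩
    | 1 => exact ⟨0, 1, by simp [sdβ]⟩
  exact PresentedGroup.generated_by (sdRels n) H hH x

end SD2

section SD3
variable (n : ℕ) (hn : 2 ≤ n)

lemma sdφ_α (hn1 : 1 ≤ n) : sdφ n hn1 (sdα n) = sdA n := PresentedGroup.toGroup.of _
lemma sdφ_β (hn1 : 1 ≤ n) : sdφ n hn1 (sdβ n) = sdB n := PresentedGroup.toGroup.of _

noncomputable def sdF : ZMod (4 * n) × ZMod 2 → SemidihedralGroup n := fun p =>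
  (sdα n) ^ (p.1.val) * (sdβ n) ^ (p.2.val)

lemma sdF_surj (hn1 : 1 ≤ n) : Function.Surjective (sdF n) := by
  haveI : NeZero (4 * n) := ⟨by omega⟩
  intro x
  obtain ⟨i, j, rfl⟩ := sd_classify n hn1 x
  refine ⟨⟨(i : ZMod (4 * n)), (j : ZMod 2)⟩, ?_⟩
  unfold sdF
  rw [ZMod.val_natCast, ZMod.val_natCast, ← sdα_mod, ← sdβ_mod]

lemma sdU_ne_one (hn2 : 2 ≤ n) : sdU n ≠ 1 := by
  intro h
  have h1 : ((2 * n - 1 : ℕ) : ZMod (4 * n)) = ((1 : ℕ) : ZMod (4 * n)) := by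
    rw [sdU_cast n (by omega), h, Nat.cast_one]
  rw [ZMod.natCast_eq_natCast_iff'] at h1
  rw [Nat.mod_eq_of_lt (by omega), Nat.mod_eq_of_lt (by omega)] at h1
  omega

lemma sdF_inj (hn2 : 2 ≤ n) : Function.Injective (sdF n) := by
  haveI : NeZero (4 * n) := ⟨by omega⟩
  intro p q hpq
  have hn1 : 1 ≤ n := by omega
  have hφ := congrArg (sdφ n hn1) hpq
  unfold sdF at hφ
  rw [map_mul, map_mul, map_pow, map_pow, map_pow, map_pow, sdφ_α, sdφ_β] at hφ
  have h0 := congrArg (fun σ : Equiv.Perm (ZMod (4 * n)) => σ 0) hφ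
  have h1 := congrArg (fun σ : Equiv.Perm (ZMod (4 * n)) => σ 1) hφ
  simp only [Equiv.Perm.mul_apply] at h0 h1
  rw [sdB_pow, sdB_pow, sdA_pow, sdA_pow, mul_zero, mul_zero, add_zero, add_zero] at h0
  have hp1 : p.1 = q.1 := by
    rwa [ZMod.natCast_val, ZMod.natCast_val, ZMod.cast_id, ZMod.cast_id] at h0
  rw [sdB_pow, sdB_pow, sdA_pow, sdA_pow, mul_one, mul_one, h0] at h1
  have hU : sdU n ^ p.2.val = sdU n ^ q.2.val := by
    exact add_left_cancel h1
  have hp2 : p.2 = q.2 := by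
    have hpv : p.2.val < 2 := p.2.val_lt
    have hqv : q.2.val < 2 := q.2.val_lt
    have hveq : p.2.val = q.2.val := by
      interval_cases h : p.2.val <;> interval_cases h' : q.2.val <;>
        simp_all [pow_zero, pow_one]
      · exact absurd hU.symm (by simpa using sdU_ne_one n hn2)
      · exact absurd hU (by simpa using sdU_ne_one n hn2)
    have := congrArg (fun v : ℕ => (v : ZMod 2)) hveq
    simpa [ZMod.natCast_val, ZMod.cast_id] using this
  exact Prod.ext hp1 hp2

lemma sd_card (hn2 : 2 ≤ n) : Nat.card (SemidihedralGroup n) = 8 * n := by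
  rw [← Nat.card_eq_of_bijective (sdF n) ⟨sdF_inj n hn2, sdF_surj n (by omega)⟩]
  rw [Nat.card_prod, Nat.card_zmod, Nat.card_zmod]
  ring

lemma sd_finite (hn2 : 2 ≤ n) : Finite (SemidihedralGroup n) := by
  haveI : NeZero (4 * n) := ⟨by omega⟩
  exact Finite.of_surjective (sdF n) (sdF_surj n (by omega))

lemma sdα_order (hn2 : 2 ≤ n) : orderOf (sdα n) = 4 * n := by
  have hn1 : 1 ≤ n := by omega
  refine Nat.dvd_antisymm (orderOf_dvd_of_pow_eq_one (sdα_pow n)) ?_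
  have h : (sdα n) ^ (orderOf (sdα n)) = 1 := pow_orderOf_eq_one _
  have hφ := congrArg (sdφ n hn1) h
  rw [map_pow, sdφ_α, map_one] at hφ
  have h0 := congrArg (fun σ : Equiv.Perm (ZMod (4 * n)) => σ 0) hφ
  simp only [Equiv.Perm.one_apply] at h0
  rw [sdA_pow, add_zero] at h0
  rwa [ZMod.natCast_eq_zero_iff] at h0

lemma sd_out_zpowers (hn2 : 2 ≤ n) (x : SemidihedralGroup n)
    (hx : x ∉ Subgroup.zpowers (sdα n)) : x ^ 4 = 1 := by
  have hn1 : 1 ≤ n := by omega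
  obtain ⟨i, j, rfl⟩ := sd_classify n hn1 x
  rcases Nat.mod_two_eq_zero_or_one j with hj | hj
  · exfalso
    apply hx
    rw [sdβ_mod n j, hj, pow_zero, mul_one]
    exact Subgroup.pow_mem _ (Subgroup.mem_zpowers _) i
  · rw [sdβ_mod n j, hj, pow_one]
    have hsq : ((sdα n) ^ i * sdβ n) ^ 2 = (sdα n) ^ (2 * n * i) := by
      rw [pow_two, mul_assoc, ← mul_assoc (sdβ n), sd_conj, mul_assoc, ← pow_two, sdβ_sq,
        mul_one, ← pow_add]
      congr 1
      have h1 : i ≤ 2 * n * i := Nat.le_mul_of_pos_left i (by omega)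
      rw [Nat.sub_mul, one_mul]
      omega
    have : (((sdα n) ^ i * sdβ n) ^ 2) ^ 2 = 1 := by
      rw [hsq, ← pow_mul]
      have h2 : 2 * n * i * 2 = 4 * n * i := by ring
      rw [h2, pow_mul, sdα_pow, one_pow]
    rw [← pow_mul] at this
    exact this

end SD3

lemma odd_prime_of_not_pow2 (n : ℕ) (hn : 2 ≤ n) (hpow : ¬ ∃ k : ℕ, n = 2 ^ k) :
    ∃ p : ℕ, p.Prime ∧ p ∣ n ∧ p ≠ 2 := by
  by_cases h : ordCompl[2] n = 1
  · exfalso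
    apply hpow
    refine ⟨n.factorization 2, ?_⟩
    have h2 := Nat.ordProj_mul_ordCompl_eq_self n 2
    rw [h, mul_one] at h2
    exact h2.symm
  · have hn0 : n ≠ 0 := by omega
    have hd : ordCompl[2] n ∣ n := Nat.ordCompl_dvd n 2
    refine ⟨(ordCompl[2] n).minFac, Nat.minFac_prime h, dvd_trans (Nat.minFac_dvd _) hd, ?_⟩
    intro h2
    have h3 := Nat.not_dvd_ordCompl Nat.prime_two hn0
    exact h3 (by simpa only [h2] using Nat.minFac_dvd (ordCompl[2] n))

lemma superpower_adj {G : Type*} [Group G] (x y : G) (hxy : x ≠ y)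
    (h : orderOf x ∣ orderOf y ∨ orderOf y ∣ orderOf x) : (superpowerGraph G).Adj x y := by
  rw [superpowerGraph, SimpleGraph.fromRel_adj]
  exact ⟨hxy, h⟩

lemma superpower_adj_iff {G : Type*} [Group G] (x y : G) :
    (superpowerGraph G).Adj x y ↔ x ≠ y ∧ (orderOf x ∣ orderOf y ∨ orderOf y ∣ orderOf x) := by
  rw [superpowerGraph, SimpleGraph.fromRel_adj]


/-- For `n ≥ 2` not a power of `2`, the order superpower graph of
the semidihedral group of order `8n` is not minimally edge connected. -/
theorem stmt_14 (n : ℕ) (hn : 2 ≤ n) (hpow : ¬ ∃ k : ℕ, n = 2 ^ k) :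
    ¬ MinEdgeConnected (superpowerGraph (SemidihedralGroup n)) := by
  obtain ⟨p, hp, hpn, hp2⟩ := odd_prime_of_not_pow2 n hn hpow
  haveI : Finite (SemidihedralGroup n) := sd_finite n hn
  have hordα := sdα_order n hn
  have hcard := sd_card n hn
  set G := superpowerGraph (SemidihedralGroup n) with hGdef
  have hdvdall : ∀ v : SemidihedralGroup n, orderOf v ∣ 4 * n := by
    intro v
    by_cases hv : v ∈ Subgroup.zpowers (sdα n)
    · exact (orderOf_dvd_of_mem_zpowers hv).trans (by rw [hordα])
    · exact (orderOf_dvd_of_pow_eq_one (sd_out_zpowers n hn v hv)).trans ⟨n, by ring⟩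
  have hu₁ : ∀ v : SemidihedralGroup n, v ≠ 1 → G.Adj 1 v := by
    intro v hv
    exact superpower_adj _ _ (Ne.symm hv) (Or.inl (by rw [orderOf_one]; exact one_dvd _))
  have hu₂ : ∀ v : SemidihedralGroup n, v ≠ sdα n → G.Adj (sdα n) v := by
    intro v hv
    exact superpower_adj _ _ (Ne.symm hv) (Or.inr (by rw [hordα]; exact hdvdall v))
  have h12 : (1 : SemidihedralGroup n) ≠ sdα n := by
    intro h
    rw [← h, orderOf_one] at hordα
    omega
  set x₀ : SemidihedralGroup n := (sdα n) ^ (orderOf (sdα n) / p) with hx₀def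
  have hpd : p ∣ orderOf (sdα n) := by
    rw [hordα]
    exact Dvd.dvd.mul_left hpn 4
  have hx₀ord : orderOf x₀ = p :=
    orderOf_pow_orderOf_div (by rw [hordα]; omega) hpd
  have hx₀mem : x₀ ∈ Subgroup.zpowers (sdα n) :=
    Subgroup.pow_mem _ (Subgroup.mem_zpowers _) _
  have hp4 : ¬ p ∣ 4 := by
    intro h4
    have : p ∣ 2 := hp.dvd_of_dvd_pow (show p ∣ 2 ^ 2 by norm_num; exact h4)
    exact hp2 ((Nat.prime_dvd_prime_iff_eq hp Nat.prime_two).mp this)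
  have hnbhd : G.neighborSet x₀ ⊆
      (↑(Subgroup.zpowers (sdα n)) : Set (SemidihedralGroup n)) \ {x₀} := by
    intro y hy
    rw [SimpleGraph.mem_neighborSet, hGdef, superpower_adj_iff, hx₀ord] at hy
    obtain ⟨hne, hdvd⟩ := hy
    refine ⟨?_, fun h => hne (Set.mem_singleton_iff.mp h).symm⟩
    by_contra hy'
    have h4 : orderOf y ∣ 4 := orderOf_dvd_of_pow_eq_one (sd_out_zpowers n hn y hy')
    rcases hdvd with h | h
    · exact hp4 (h.trans h4)
    · rcases hp.eq_one_or_self_of_dvd _ h with h1 | h1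
      · exact hy' (by rw [orderOf_eq_one_iff.mp h1]; exact Subgroup.one_mem _)
      · exact hp4 (h1 ▸ h4)
  have hzcard : ((Subgroup.zpowers (sdα n) : Set (SemidihedralGroup n))).ncard = 4 * n := by
    rw [← Nat.card_coe_set_eq, SetLike.coe_sort_coe, Nat.card_zpowers, hordα]
  have hdeg : gDeg G x₀ ≤ 4 * n - 1 := by
    have h1 := Set.ncard_le_ncard hnbhd (Set.toFinite _)
    rw [Set.ncard_diff_singleton_of_mem hx₀mem, hzcard] at h1
    exact h1
  have hwcond : 2 * gDeg G x₀ + 1 ≤ Nat.card (SemidihedralGroup n) := by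
    rw [hcard]
    omega
  exact main_graph G 1 (sdα n) x₀ hu₁ hu₂ h12 hwcond
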